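/- Let Ω ⊆ ℝ^N (N ≥ 2) be a nonempty connected open set and let u : ℝ^N → ℝ^N be twice continuously differentiable on Ω. Suppose the symmetric part of the derivative of u vanishes on Ω, i.e., for every x ∈ Ω the matrix Du(x) + Du(x)ᵀ = 0 (equivalently, the total derivative of u at each point of Ω is an antisymmetric linear map). Then u is an infinitesimal rigid motion on Ω: there exist an antisymmetric N×N real matrix A and a vector b ∈ ℝ^N such that u(x) = A x + b for all x ∈ Ω. -/

import Mathlib

open Matrix Metric

private lemma pi_decomp {n : ℕ} (v : Fin n → ℝ) :
    v = ∑ i, v i • (Pi.single i (1:ℝ) : Fin n → ℝ) := by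
  simp_rw [← Pi.single_smul, smul_eq_mul, mul_one, Finset.univ_sum_single]

private lemma clm_pi_eq_zero {M : Type*} [NormedAddCommGroup M] [NormedSpace ℝ M] {n : ℕ}
    (f : (Fin n → ℝ) →L[ℝ] M) (h : ∀ i, f (Pi.single i 1) = 0) : f = 0 := by
  ext v
  rw [show f v = f (∑ i, v i • (Pi.single i (1:ℝ) : Fin n → ℝ)) from by rw [← pi_decomp],
    map_sum]
  simp [h]

private lemma const_of_fderiv_zero' {E F : Type*} [NormedAddCommGroup E] [NormedSpace ℝ E]
    [NormedAddCommGroup F] [NormedSpace ℝ F] {s : Set E} (hs : IsOpen s)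
    (hc : IsPreconnected s) {f : E → F} (hf : ∀ x ∈ s, HasFDerivAt f (0 : E →L[ℝ] F) x)
    {x y : E} (hx : x ∈ s) (hy : y ∈ s) : f x = f y := by
  have key : ∀ z ∈ s, ∀ᶠ w in nhds z, f w = f z := by
    intro z hz
    obtain ⟨r, hr, hball⟩ := Metric.isOpen_iff.1 hs z hz
    have hconst : ∀ w ∈ ball z r, f w = f z := by
      intro w hw
      refine (convex_ball z r).is_const_of_fderivWithin_eq_zero
        (fun p hp => ((hf p (hball hp)).differentiableAt).differentiableWithinAt)
        (fun p hp => ?_) hw (mem_ball_self hr)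
      rw [fderivWithin_of_isOpen isOpen_ball hp, (hf p (hball hp)).fderiv]
    filter_upwards [isOpen_ball.mem_nhds (mem_ball_self hr)] using hconst
  haveI : PreconnectedSpace s := Subtype.preconnectedSpace hc
  have hlc : IsLocallyConstant (fun p : s => f p.1) := by
    rw [IsLocallyConstant.iff_eventually_eq]
    intro p
    exact continuous_subtype_val.continuousAt.eventually (key p.1 p.2)
  exact hlc.apply_eq_of_preconnectedSpace ⟨x, hx⟩ ⟨y, hy⟩

/-- (Rigid displacement lemma.) If `u` is twice continuously
differentiable on a nonempty connected open set `Ω ⊆ ℝ^N` (`N ≥ 2`) and the symmetric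
part of its Jacobian `Du(x) + Du(x)ᵀ` vanishes on `Ω`, then `u` is an infinitesimal
rigid motion on `Ω`: `u x = A x + b` with `A` antisymmetric. -/
theorem rigid_displacement_lemma
    {N : ℕ} (hN : 2 ≤ N)
    (Ω : Set (Fin N → ℝ)) (hΩopen : IsOpen Ω) (hΩconn : IsConnected Ω)
    (u : (Fin N → ℝ) → (Fin N → ℝ))
    (hu : ContDiffOn ℝ 2 u Ω)
    (hsym : ∀ x ∈ Ω, ∀ i j,
      fderiv ℝ u x (Pi.single j 1) i + fderiv ℝ u x (Pi.single i 1) j = 0) :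
    ∃ (A : Matrix (Fin N) (Fin N) ℝ) (b : Fin N → ℝ),
      Aᵀ = -A ∧ ∀ x ∈ Ω, u x = A.mulVec x + b := by
  set g : (Fin N → ℝ) → (Fin N → ℝ) →L[ℝ] (Fin N → ℝ) := fderiv ℝ u with hg
  -- differentiability facts
  have hcx : ∀ x ∈ Ω, ContDiffAt ℝ 2 u x := fun x hx => hu.contDiffAt (hΩopen.mem_nhds hx)
  have hgd : ∀ x ∈ Ω, DifferentiableAt ℝ g x := fun x hx =>
    ((hcx x hx).fderiv_right (m := 1) (by norm_num)).differentiableAt one_ne_zero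
  -- the second derivative vanishes on Ω
  have hH0 : ∀ x ∈ Ω, fderiv ℝ g x = 0 := by
    intro x hx
    set H := fderiv ℝ g x with hHdef
    have hschwarz : ∀ v w, H v w = H w v := (hcx x hx).isSymmSndFDerivAt (by simp)
    -- antisymmetry from differentiating hsym
    have hanti : ∀ (i j : Fin N) (v : Fin N → ℝ),
        H v (Pi.single j 1) i + H v (Pi.single i 1) j = 0 := by
      intro i j v
      set L : Fin N → Fin N → ((Fin N → ℝ) →L[ℝ] (Fin N → ℝ)) →L[ℝ] ℝ := fun i j =>
        (ContinuousLinearMap.proj i).comp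
          (ContinuousLinearMap.apply ℝ (Fin N → ℝ) (Pi.single j 1)) with hL
      have hψ : ∀ i j, HasFDerivAt (fun y => g y (Pi.single j 1) i) ((L i j).comp H) x :=
        fun i j => (L i j).hasFDerivAt.comp x (hgd x hx).hasFDerivAt
      have hφ : HasFDerivAt
          (fun y => g y (Pi.single j 1) i + g y (Pi.single i 1) j)
          ((L i j).comp H + (L j i).comp H) x := (hψ i j).add (hψ j i)
      have heq : (fun y => g y (Pi.single j 1) i + g y (Pi.single i 1) j)
          =ᶠ[nhds x] (fun _ => (0:ℝ)) := by
        filter_upwards [hΩopen.mem_nhds hx] with y hy using hsym y hy i j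
      have hzero : (L i j).comp H + (L j i).comp H = 0 := by
        rw [← hφ.fderiv, heq.fderiv_eq]
        simp
      have := congrArg (fun (T : (Fin N → ℝ) →L[ℝ] ℝ) => T v) hzero
      simpa [L] using this
    -- braid argument
    set S : Fin N → Fin N → Fin N → ℝ := fun k j i =>
      H (Pi.single k 1) (Pi.single j 1) i with hS
    have ha : ∀ k j i, S k j i = S j k i := fun k j i =>
      congrFun (hschwarz (Pi.single k 1) (Pi.single j 1)) i
    have hb : ∀ k j i, S k j i + S k i j = 0 := fun k j i =>
      hanti i j (Pi.single k 1)
    have hSz : ∀ k j i, S k j i = 0 := by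
      intro k j i
      linarith [ha k j i, hb j k i, ha j i k, hb i j k, ha i k j, hb k i j]
    refine clm_pi_eq_zero H (fun k => ?_)
    refine clm_pi_eq_zero (H (Pi.single k 1)) (fun j => ?_)
    funext i
    exact hSz k j i
  -- g is constant on Ω
  obtain ⟨x₀, hx₀⟩ := hΩconn.nonempty
  have hgzero : ∀ x ∈ Ω, HasFDerivAt g (0 : (Fin N → ℝ) →L[ℝ] _) x := by
    intro x hx
    have := (hgd x hx).hasFDerivAt
    rwa [hH0 x hx] at this
  have hgconst : ∀ x ∈ Ω, g x = g x₀ := fun x hx =>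
    const_of_fderiv_zero' hΩopen hΩconn.isPreconnected hgzero hx hx₀
  -- the matrix A
  set A : Matrix (Fin N) (Fin N) ℝ := Matrix.of fun i j => g x₀ (Pi.single j 1) i with hA
  have hAanti : Aᵀ = -A := by
    ext i j
    have := hsym x₀ hx₀ j i
    simp only [transpose_apply, Matrix.neg_apply, hA, Matrix.of_apply]
    linarith
  have hmul : ∀ v, A.mulVec v = g x₀ v := by
    intro v
    funext i
    rw [show g x₀ v = g x₀ (∑ j, v j • (Pi.single j (1:ℝ) : Fin N → ℝ)) from by
      rw [← pi_decomp], map_sum]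
    simp [A, Matrix.mulVec, dotProduct, Finset.sum_apply, mul_comm]
  -- the function u - A x is constant
  refine ⟨A, u x₀ - A.mulVec x₀, hAanti, fun x hx => ?_⟩
  have hmulfun : (fun y => A.mulVec y) = fun y => g x₀ y := funext hmul
  have hzero : ∀ y ∈ Ω, HasFDerivAt (fun z => u z - A.mulVec z)
      (0 : (Fin N → ℝ) →L[ℝ] (Fin N → ℝ)) y := by
    intro y hy
    have h1 : HasFDerivAt u (g y) y :=
      (((hcx y hy).differentiableAt (by norm_num))).hasFDerivAt
    have h2 : HasFDerivAt (fun z => A.mulVec z) (g x₀) y := by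
      rw [hmulfun]; exact (g x₀).hasFDerivAt
    have := h1.sub h2
    rwa [hgconst y hy, sub_self] at this
  have hconst := const_of_fderiv_zero' hΩopen hΩconn.isPreconnected hzero hx hx₀
  have : u x - A.mulVec x = u x₀ - A.mulVec x₀ := hconst
  exact sub_eq_iff_eq_add'.mp this
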